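/- Law of large numbers for ⊞^t: let t ∈ ℝ \ ℤ_{≥0} and let A ∈ U = 1 + zℝ⟦z⟧ satisfy κ_1^t(A) = λ. Then D_{1/m}[A^{⊞^t m}] → B_λ^{(t)} as m → ∞, in the sense that for every n ≥ 0 the n-th coefficient of D_{1/m}[A^{⊞^t m}] converges to the n-th coefficient of B_λ^{(t)}. -/

import Mathlib

open PowerSeries Finset

/-- Falling factorial `(t)_k = t (t-1) ⋯ (t-k+1)`. -/
noncomputable def ffall (t : ℝ) (k : ℕ) : ℝ := ∏ i ∈ Finset.range k, (t - i)

/-- The `t`-deformed convolution of formal power series. -/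
noncomputable def tconv (t : ℝ) (A B : PowerSeries ℝ) : PowerSeries ℝ :=
  PowerSeries.mk fun k => ∑ p ∈ Finset.HasAntidiagonal.antidiagonal k,
    ffall t k / (ffall t p.1 * ffall t p.2)
      * (PowerSeries.coeff p.1 A) * (PowerSeries.coeff p.2 B)

/-- Formal logarithm of a power series (with constant term 1):
`log A = - Σ_{k ≥ 1} (1 - A)^k / k`. -/
noncomputable def flog (A : PowerSeries ℝ) : PowerSeries ℝ :=
  PowerSeries.mk fun n =>
    -∑ k ∈ Finset.range (n + 1), (PowerSeries.coeff n ((1 - A) ^ k) : ℝ) / k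

/-- Power sums of `A ∈ 1 + zℝ⟦z⟧`, defined by `Σ p_k(A) z^k = -z (d/dz) log A(z)`. -/
noncomputable def powSum (A : PowerSeries ℝ) (k : ℕ) : ℝ :=
  -(k : ℝ) * PowerSeries.coeff k (flog A)

/-- `E^t[A](z) = Σ_k (t^k/(t)_k) a_k z^k`. -/
noncomputable def Et (t : ℝ) (A : PowerSeries ℝ) : PowerSeries ℝ :=
  PowerSeries.mk fun k => t ^ k / ffall t k * PowerSeries.coeff k A

/-- The `t`-deformed cumulant transform `C^t[A](z) = -(z/t)(d/dz) log(E^t[A](z))`. -/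
noncomputable def Ct (t : ℝ) (A : PowerSeries ℝ) : PowerSeries ℝ :=
  PowerSeries.mk fun n => -(1 / t) * ((n : ℝ) * PowerSeries.coeff n (flog (Et t A)))

/-- The `i`-th `t`-deformed cumulant of `A`. -/
noncomputable def kappa (t : ℝ) (A : PowerSeries ℝ) (i : ℕ) : ℝ :=
  PowerSeries.coeff i (Ct t A)

/-- The `m`-fold `⊞^t`-convolution power `A^{⊞^t m}`. -/
noncomputable def convPow (t : ℝ) (A : PowerSeries ℝ) : ℕ → PowerSeries ℝ
  | 0 => 1
  | n + 1 => tconv t A (convPow t A n)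

/-- The `t`-deformed binomial series `B_λ^{(t)}(z) = (1-λz)^t`. -/
noncomputable def Bt (t lam : ℝ) : PowerSeries ℝ :=
  PowerSeries.mk fun k => (-1) ^ k * ffall t k / (k.factorial : ℝ) * lam ^ k

section Aux

open Filter

lemma ffall_ne_zero {t : ℝ} (ht : ∀ n : ℕ, t ≠ (n : ℝ)) (k : ℕ) : ffall t k ≠ 0 := by
  refine Finset.prod_ne_zero_iff.2 fun i _ => sub_ne_zero.2 (ht i)

lemma coeff_pow_eq_zero {G : PowerSeries ℝ} (hG : constantCoeff G = 0)
    {n j : ℕ} (h : n < j) : coeff n (G ^ j) = 0 := by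
  have h1 : (X : PowerSeries ℝ) ^ j ∣ G ^ j :=
    pow_dvd_pow_of_dvd (X_dvd_iff.2 hG) j
  exact (X_pow_dvd_iff.1 h1) n h

lemma coeff_pow_self {G : PowerSeries ℝ} (hG : constantCoeff G = 0) (n : ℕ) :
    coeff n (G ^ n) = (coeff 1 G) ^ n := by
  induction n with
  | zero => simp
  | succ n ih =>
    rw [pow_succ', coeff_mul]
    rw [Finset.sum_eq_single (1, n)]
    · rw [ih, pow_succ']
    · rintro ⟨i, j⟩ hij hne
      rw [Finset.HasAntidiagonal.mem_antidiagonal] at hij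
      rcases Nat.eq_zero_or_pos i with hi | hi
      · subst hi
        rw [coeff_zero_eq_constantCoeff_apply, hG, zero_mul]
      · by_cases hi1 : i = 1
        · exact absurd (by subst hi1; simp at hij ⊢; omega) hne
        · have : j < n := by omega
          rw [coeff_pow_eq_zero hG this, mul_zero]
    · intro h; exact absurd (Finset.HasAntidiagonal.mem_antidiagonal.2 (by omega)) h

lemma choose_div_tendsto (n j : ℕ) (hj : j ≤ n) :
    Tendsto (fun m : ℕ => (m.choose j : ℝ) / (m : ℝ) ^ n) atTop
      (nhds (if j = n then ((n.factorial : ℝ))⁻¹ else 0)) := by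
  have key : Tendsto (fun m : ℕ =>
      (∏ i ∈ range j, (1 - (i : ℝ) / m)) * ((m : ℝ))⁻¹ ^ (n - j) * ((j.factorial : ℝ))⁻¹)
      atTop (nhds ((∏ i ∈ range j, (1:ℝ)) * (0:ℝ) ^ (n - j) * ((j.factorial : ℝ))⁻¹)) := by
    refine Tendsto.mul_const _ (Tendsto.mul ?_ ?_)
    · refine tendsto_finset_prod _ fun i _ => ?_
      simpa using (tendsto_const_nhds (x := (1:ℝ))).sub
        (tendsto_const_div_atTop_nhds_zero_nat (i : ℝ))
    · exact Tendsto.pow (by simpa using tendsto_one_div_atTop_nhds_zero_nat (𝕜 := ℝ)) _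
  have heq : ∀ᶠ m : ℕ in atTop,
      (∏ i ∈ range j, (1 - (i : ℝ) / m)) * ((m : ℝ))⁻¹ ^ (n - j) * ((j.factorial : ℝ))⁻¹
        = (m.choose j : ℝ) / (m : ℝ) ^ n := by
    filter_upwards [eventually_ge_atTop (max j 1)] with m hm
    have hj' : j ≤ m := le_trans (le_max_left _ _) hm
    have hm0 : (m : ℝ) ≠ 0 := by
      have : 1 ≤ m := le_trans (le_max_right _ _) hm
      positivity
    have hfact : (j.factorial : ℝ) ≠ 0 := Nat.cast_ne_zero.2 j.factorial_ne_zero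
    have hdesc : (m.choose j : ℝ) * (j.factorial : ℝ) = ∏ i ∈ range j, ((m : ℝ) - i) := by
      have h1 : (j.factorial * m.choose j : ℕ) = ∏ i ∈ range j, (m - i) := by
        rw [← Nat.descFactorial_eq_factorial_mul_choose, Nat.descFactorial_eq_prod_range]
      have hc := congrArg (fun x : ℕ => (x : ℝ)) h1
      push_cast at hc
      have hcast : ∀ i ∈ range j, ((m - i : ℕ) : ℝ) = (m : ℝ) - i := fun i hi =>
        Nat.cast_sub (le_trans (Finset.mem_range.1 hi).le hj')
      rw [Finset.prod_congr rfl hcast] at hc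
      linarith
    have hprod : ∏ i ∈ range j, (1 - (i : ℝ) / m)
        = (∏ i ∈ range j, ((m : ℝ) - i)) / (m : ℝ) ^ j := by
      have : ∀ i ∈ range j, (1 - (i : ℝ) / m) = ((m : ℝ) - i) / m := fun i _ => by
        field_simp
      rw [Finset.prod_congr rfl this, Finset.prod_div_distrib]
      simp
    have hmn : (m : ℝ) ^ j * (m : ℝ) ^ (n - j) = (m : ℝ) ^ n := by
      rw [← pow_add]; congr 1; omega
    have hch : (m.choose j : ℝ) = (∏ i ∈ range j, ((m : ℝ) - i)) / (j.factorial : ℝ) := by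
      rw [eq_div_iff hfact]; exact hdesc
    rw [hch, hprod]
    field_simp
    rw [← hmn]; ring_nf
    rw [inv_pow]; field_simp
  refine Tendsto.congr' heq ?_
  convert key using 2
  rcases eq_or_ne j n with rfl | hne
  · simp
  · have h0 : n - j ≠ 0 := by omega
    simp [hne, zero_pow h0]

lemma convPow_coeff (t : ℝ) (ht : ∀ k, ffall t k ≠ 0) (A : PowerSeries ℝ) (m : ℕ) :
    ∀ n, coeff n (convPow t A m)
      = ffall t n * coeff n ((PowerSeries.mk fun k => coeff k A / ffall t k) ^ m) := by
  induction m with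
  | zero =>
    intro n
    show coeff n 1 = ffall t n * coeff n (_ ^ 0)
    rw [pow_zero]
    rcases Nat.eq_zero_or_pos n with rfl | hn
    · simp [ffall]
    · simp [coeff_one, hn.ne']
  | succ m ih =>
    intro n
    show coeff n (tconv t A (convPow t A m)) = _
    rw [tconv, coeff_mk, pow_succ', coeff_mul]
    rw [Finset.mul_sum]
    refine Finset.sum_congr rfl fun p hp => ?_
    rw [ih p.2, coeff_mk]
    have h1 := ht p.1
    have h2 := ht p.2
    field_simp

end Aux

/-- Law of large numbers for `⊞^t`: if `A ∈ U` has `κ_1^t(A) = λ`, then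
`D_{1/m}[A^{⊞^t m}] → B_λ^{(t)}` coefficientwise as `m → ∞`. -/
theorem lln_tconv (t : ℝ) (ht : ∀ n : ℕ, t ≠ (n : ℝ))
    (A : PowerSeries ℝ) (hA : PowerSeries.constantCoeff A = 1)
    (lam : ℝ) (hkappa : kappa t A 1 = lam) (n : ℕ) :
    Filter.Tendsto
      (fun m : ℕ =>
        PowerSeries.coeff n (PowerSeries.rescale (1 / (m : ℝ)) (convPow t A m)))
      Filter.atTop (nhds (PowerSeries.coeff n (Bt t lam))) := by
  have ht0 : t ≠ 0 := by simpa using ht 0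
  have hffne := ffall_ne_zero ht
  have hffall1 : ffall t 1 = t := by simp [ffall]
  -- step 1 : κ₁ = -a₁/t
  have ha1 : coeff 1 A / t = -lam := by
    have h := hkappa
    simp only [kappa, Ct, coeff_mk, flog, Et, Finset.sum_range_succ, Finset.range_one,
      Finset.sum_singleton] at h
    simp only [pow_zero, pow_one, map_sub, coeff_one, coeff_mk, Nat.cast_zero,
      Nat.cast_one, div_one] at h
    rw [if_neg one_ne_zero, hffall1] at h
    field_simp at h ⊢
    linarith
  set F : PowerSeries ℝ := PowerSeries.mk fun k => coeff k A / ffall t k with hFdef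
  set G : PowerSeries ℝ := F - 1 with hGdef
  have hG0 : constantCoeff G = 0 := by
    have hF0 : constantCoeff F = 1 := by
      rw [hFdef, ← coeff_zero_eq_constantCoeff_apply, coeff_mk,
        coeff_zero_eq_constantCoeff_apply, hA]
      simp [ffall]
    rw [hGdef, map_sub, map_one, hF0, sub_self]
  have hFG : F = G + 1 := by rw [hGdef]; ring
  have hg1 : coeff 1 G = -lam := by
    rw [hGdef, map_sub, coeff_one]
    simp [hFdef, coeff_mk, hffall1, ha1]
  -- step 2 : coefficient formula
  have hFm : ∀ m : ℕ, coeff n (F ^ m)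
      = ∑ j ∈ range (n + 1), coeff n (G ^ j) * (m.choose j : ℝ) := by
    intro m
    rw [hFG, add_pow]
    rw [map_sum]
    have hterm : ∀ j : ℕ, coeff n (G ^ j * 1 ^ (m - j) * (m.choose j : PowerSeries ℝ))
        = coeff n (G ^ j) * (m.choose j : ℝ) := by
      intro j
      rw [one_pow, mul_one, ← map_natCast (C (R := ℝ)) (m.choose j), coeff_mul_C]
    simp only [hterm]
    rcases le_total m n with h | h
    · refine Finset.sum_subset (Finset.range_subset_range.2 (by omega)) fun j hj hnotj => ?_
      have : m < j := by simp only [Finset.mem_range] at hj hnotj; omega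
      rw [Nat.choose_eq_zero_of_lt this, Nat.cast_zero, mul_zero]
    · symm
      refine Finset.sum_subset (Finset.range_subset_range.2 (by omega)) fun j hj hnotj => ?_
      have : n < j := by simp only [Finset.mem_range] at hj hnotj; omega
      rw [coeff_pow_eq_zero hG0 this, zero_mul]
  have hfun : ∀ m : ℕ, coeff n (PowerSeries.rescale (1 / (m : ℝ)) (convPow t A m))
      = ∑ j ∈ range (n + 1),
          (ffall t n * coeff n (G ^ j)) * ((m.choose j : ℝ) / (m : ℝ) ^ n) := by
    intro m
    rw [coeff_rescale, convPow_coeff t hffne A m n, ← hFdef, hFm m, Finset.mul_sum,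
      Finset.mul_sum]
    refine Finset.sum_congr rfl fun j _ => ?_
    rw [div_pow, one_pow]
    ring
  -- step 3 : pass to the limit
  have hlim : Filter.Tendsto
      (fun m : ℕ => ∑ j ∈ range (n + 1),
          (ffall t n * coeff n (G ^ j)) * ((m.choose j : ℝ) / (m : ℝ) ^ n))
      Filter.atTop
      (nhds (∑ j ∈ range (n + 1),
          (ffall t n * coeff n (G ^ j)) * (if j = n then ((n.factorial : ℝ))⁻¹ else 0))) := by
    refine tendsto_finset_sum _ fun j hj => ?_
    exact (choose_div_tendsto n j (by
      simpa using Nat.lt_succ_iff.1 (Finset.mem_range.1 hj))).const_mul _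
  have hval : (∑ j ∈ range (n + 1),
      (ffall t n * coeff n (G ^ j)) * (if j = n then ((n.factorial : ℝ))⁻¹ else 0))
      = coeff n (Bt t lam) := by
    rw [Finset.sum_eq_single n]
    · rw [if_pos rfl, coeff_pow_self hG0, hg1, Bt, coeff_mk]
      rw [neg_pow lam n]
      field_simp
    · intro j _ hjn
      rw [if_neg hjn, mul_zero]
    · intro h
      exact absurd (Finset.mem_range.2 (Nat.lt_succ_self n)) h
  rw [← hval]
  exact hlim.congr fun m => (hfun m).symm
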